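/- Let A be the commutative F2-algebra F2[ξ_1, ξ_2, …, τ_0, τ_1, …]/(τ_i² : i ≥ 0), the polynomial algebra on countably many generators ξ_1, ξ_2, … and τ_0, τ_1, … modulo the squares of all the τ_i. Then: (1) there is a unique F2-algebra homomorphism Δ : A → A ⊗_{F2} A with Δ(ξ_n) = Σ_{i=0}^{n} ξ_{n−i}^{2^i} ⊗ ξ_i and Δ(τ_n) = τ_n ⊗ 1 + Σ_{i=0}^{n} ξ_{n−i}^{2^i} ⊗ τ_i (with the convention ξ_0 = 1), and a unique F2-algebra homomorphism ε : A → F2 sending every ξ_n and every τ_n to 0; (2) Δ is coassociative and ε is a counit for Δ, making (A, Δ, ε) a commutative bialgebra over F2; (3) this bialgebra admits an antipode, i.e. A is a Hopf algebra over F2. (This is the Hopf algebra structure of the Cτ-linear dual Steenrod algebra Â_{*,*} of Proposition 2.4.) -/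

import Mathlib

/-!
STATEMENT 6: Let `A = F2[ξ_1, ξ_2, …, τ_0, τ_1, …]/(τ_i²)`.  There is a unique
`F2`-algebra map `Δ : A → A ⊗ A` with `Δ(ξ_n) = Σ_{i=0}^{n} ξ_{n−i}^{2^i} ⊗ ξ_i` and
`Δ(τ_n) = τ_n ⊗ 1 + Σ_{i=0}^{n} ξ_{n−i}^{2^i} ⊗ τ_i` (convention `ξ_0 = 1`), and a
unique `F2`-algebra map `ε : A → F2` killing all generators; `Δ` is coassociative with
counit `ε`, making `A` a commutative bialgebra, and this bialgebra admits an
antipode, i.e. `A` is a Hopf algebra over `F2`.  (The Cτ-linear dual Steenrod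
algebra `Â_{*,*}` of Proposition 2.4.)
-/

open scoped TensorProduct
open Finset MvPolynomial

set_option synthInstance.maxHeartbeats 1000000
set_option maxHeartbeats 1600000

/-- The Cτ-linear dual Steenrod algebra
`A = F2[ξ_1, ξ_2, …, τ_0, τ_1, …]/(τ_i² : i ≥ 0)`; the variables `Sum.inl n`
are the `ξ_{n+1}` and the variables `Sum.inr i` are the `τ_i`. -/
abbrev MotDualSt : Type :=
  MvPolynomial (ℕ ⊕ ℕ) (ZMod 2) ⧸
    Ideal.span (Set.range fun i : ℕ =>
      (MvPolynomial.X (Sum.inr i) : MvPolynomial (ℕ ⊕ ℕ) (ZMod 2)) ^ 2)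

/-- The generators `ξ_n` of `A`, with the convention `ξ_0 = 1`. -/
noncomputable def xiA : ℕ → MotDualSt
  | 0 => 1
  | n + 1 => Ideal.Quotient.mk _ (MvPolynomial.X (Sum.inl n))

/-- The generators `τ_n` of `A`; they satisfy `τ_n² = 0`. -/
noncomputable def tauA (n : ℕ) : MotDualSt :=
  Ideal.Quotient.mk _ (MvPolynomial.X (Sum.inr n))

/-- `D` is the motivic Milnor comultiplication:
`D(ξ_n) = Σ_{i=0}^{n} ξ_{n−i}^{2^i} ⊗ ξ_i` for `n ≥ 1` and
`D(τ_n) = τ_n ⊗ 1 + Σ_{i=0}^{n} ξ_{n−i}^{2^i} ⊗ τ_i`. -/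
def IsComulA (D : MotDualSt →ₐ[ZMod 2] MotDualSt ⊗[ZMod 2] MotDualSt) : Prop :=
  (∀ n : ℕ, D (xiA (n + 1)) =
      ∑ i ∈ Finset.range (n + 2), ((xiA (n + 1 - i)) ^ (2 ^ i)) ⊗ₜ[ZMod 2] (xiA i)) ∧
  (∀ n : ℕ, D (tauA n) =
      (tauA n) ⊗ₜ[ZMod 2] (1 : MotDualSt) +
        ∑ i ∈ Finset.range (n + 1), ((xiA (n - i)) ^ (2 ^ i)) ⊗ₜ[ZMod 2] (tauA i))

/-- `e` is the counit: it kills every `ξ_n` (`n ≥ 1`) and every `τ_n`. -/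
def IsCounitA (e : MotDualSt →ₐ[ZMod 2] ZMod 2) : Prop :=
  (∀ n : ℕ, e (xiA (n + 1)) = 0) ∧ (∀ n : ℕ, e (tauA n) = 0)

/-! ### Char 2 lemmas -/
section Char2
variable {R : Type*} [CommRing R] [Algebra (ZMod 2) R]

lemma c2_add_self (x : R) : x + x = 0 := by
  have h : (2 : ZMod 2) • x = x + x := two_smul _ x
  have h2 : (2 : ZMod 2) = 0 := by decide
  rw [h2, zero_smul] at h
  exact h.symm

lemma c2_sq (x y : R) : (x + y) ^ 2 = x ^ 2 + y ^ 2 := by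
  have h : (x + y) ^ 2 = x ^ 2 + (x * y + x * y) + y ^ 2 := by ring
  rw [h, c2_add_self (x * y)]; ring

lemma c2_pow (k : ℕ) (x y : R) : (x + y) ^ 2 ^ k = x ^ 2 ^ k + y ^ 2 ^ k := by
  induction k with
  | zero => simp
  | succ k ih => rw [pow_succ, pow_mul, pow_mul, pow_mul, ih, c2_sq]

lemma c2_sum_pow {ι : Type*} (k : ℕ) (s : Finset ι) (f : ι → R) :
    (∑ i ∈ s, f i) ^ 2 ^ k = ∑ i ∈ s, f i ^ 2 ^ k := by
  classical
  induction s using Finset.induction with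
  | empty => simp [zero_pow (Nat.two_pow_pos k).ne']
  | insert _ _ h ih => rw [Finset.sum_insert h, Finset.sum_insert h, c2_pow, ih]

lemma c2_sum_sq {ι : Type*} (s : Finset ι) (f : ι → R) :
    (∑ i ∈ s, f i) ^ 2 = ∑ i ∈ s, f i ^ 2 := by
  simpa using c2_sum_pow 1 s f

end Char2

/-! ### Triangle reindexing -/
lemma triangle {M : Type*} [AddCommMonoid M] (n : ℕ) (f : ℕ → ℕ → M) :
    ∑ i ∈ Finset.range (n + 1), ∑ j ∈ Finset.range (n + 1 - i), f i j
      = ∑ k ∈ Finset.range (n + 1), ∑ i ∈ Finset.range (k + 1), f i (k - i) := by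
  rw [Finset.sum_sigma', Finset.sum_sigma']
  refine Finset.sum_nbij' (fun p => (⟨p.1 + p.2, p.1⟩ : Σ _ : ℕ, ℕ))
    (fun p => (⟨p.2, p.1 - p.2⟩ : Σ _ : ℕ, ℕ)) ?_ ?_ ?_ ?_ ?_
  · rintro ⟨i, j⟩ h
    simp only [Finset.mem_sigma, Finset.mem_range] at h ⊢
    omega
  · rintro ⟨k, i⟩ h
    simp only [Finset.mem_sigma, Finset.mem_range] at h ⊢
    omega
  · rintro ⟨i, j⟩ h
    simp only [Finset.mem_sigma, Finset.mem_range] at h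
    simp only [Sigma.mk.inj_iff, heq_iff_eq]
    exact ⟨trivial, by omega⟩
  · rintro ⟨k, i⟩ h
    simp only [Finset.mem_sigma, Finset.mem_range] at h
    simp only [Sigma.mk.inj_iff, heq_iff_eq]
    exact ⟨by omega, trivial⟩
  · rintro ⟨i, j⟩ h
    simp only [Nat.add_sub_cancel_left]

/-! ### Basic facts about the quotient ring -/

lemma tauA_sq (n : ℕ) : tauA n ^ 2 = 0 := by
  have : tauA n ^ 2 = Ideal.Quotient.mk _
      ((MvPolynomial.X (Sum.inr n) : MvPolynomial (ℕ ⊕ ℕ) (ZMod 2)) ^ 2) := by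
    rw [tauA, map_pow]
  rw [this, Ideal.Quotient.eq_zero_iff_mem]
  exact Ideal.subset_span ⟨n, rfl⟩

lemma xiA_succ (n : ℕ) :
    xiA (n + 1) = Ideal.Quotient.mk _ (MvPolynomial.X (Sum.inl n)) := rfl

lemma algHomA_ext {B : Type*} [Semiring B] [Algebra (ZMod 2) B]
    {f g : MotDualSt →ₐ[ZMod 2] B}
    (h : ∀ v, f (Ideal.Quotient.mk _ (MvPolynomial.X v))
      = g (Ideal.Quotient.mk _ (MvPolynomial.X v))) : f = g := by
  apply Ideal.Quotient.algHom_ext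
  apply MvPolynomial.algHom_ext
  intro v
  simpa [Ideal.Quotient.mkₐ_eq_mk] using h v

/-- Lift a choice of generator images (with square-zero values on the `τ`s) to an
algebra hom out of `MotDualSt`. -/
noncomputable def liftA {B : Type*} [CommRing B] [Algebra (ZMod 2) B]
    (g : ℕ ⊕ ℕ → B) (hg : ∀ i : ℕ, g (Sum.inr i) ^ 2 = 0) :
    MotDualSt →ₐ[ZMod 2] B :=
  Ideal.Quotient.liftₐ _ (MvPolynomial.aeval g) (by
    intro a ha
    have hle : Ideal.span (Set.range fun i : ℕ =>
        (MvPolynomial.X (Sum.inr i) : MvPolynomial (ℕ ⊕ ℕ) (ZMod 2)) ^ 2)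
        ≤ RingHom.ker (MvPolynomial.aeval g : MvPolynomial (ℕ ⊕ ℕ) (ZMod 2) →ₐ[ZMod 2] B) := by
      rw [Ideal.span_le]
      rintro _ ⟨i, rfl⟩
      simp [RingHom.mem_ker, map_pow, hg i]
    exact hle ha)

lemma liftA_mk {B : Type*} [CommRing B] [Algebra (ZMod 2) B]
    (g : ℕ ⊕ ℕ → B) (hg : ∀ i : ℕ, g (Sum.inr i) ^ 2 = 0)
    (p : MvPolynomial (ℕ ⊕ ℕ) (ZMod 2)) :
    liftA g hg (Ideal.Quotient.mk _ p) = MvPolynomial.aeval g p := by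
  rfl


/-! ### Existence of `D` and `e` -/

noncomputable def gD : ℕ ⊕ ℕ → MotDualSt ⊗[ZMod 2] MotDualSt
  | Sum.inl n => ∑ i ∈ Finset.range (n + 2), ((xiA (n + 1 - i)) ^ (2 ^ i)) ⊗ₜ[ZMod 2] (xiA i)
  | Sum.inr n => (tauA n) ⊗ₜ[ZMod 2] (1 : MotDualSt) +
      ∑ i ∈ Finset.range (n + 1), ((xiA (n - i)) ^ (2 ^ i)) ⊗ₜ[ZMod 2] (tauA i)

lemma gD_sq (i : ℕ) : gD (Sum.inr i) ^ 2 = 0 := by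
  show ((tauA i) ⊗ₜ[ZMod 2] (1 : MotDualSt) +
      ∑ j ∈ Finset.range (i + 1), ((xiA (i - j)) ^ (2 ^ j)) ⊗ₜ[ZMod 2] (tauA j)) ^ 2 = 0
  rw [c2_sq (R := MotDualSt ⊗[ZMod 2] MotDualSt),
    c2_sum_sq (R := MotDualSt ⊗[ZMod 2] MotDualSt)]
  simp [Algebra.TensorProduct.tmul_pow, tauA_sq, TensorProduct.zero_tmul,
    TensorProduct.tmul_zero]

noncomputable def Dmap : MotDualSt →ₐ[ZMod 2] MotDualSt ⊗[ZMod 2] MotDualSt :=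
  liftA gD gD_sq

lemma Dmap_comul : IsComulA Dmap := by
  constructor
  · intro n
    rw [xiA_succ, Dmap, liftA_mk, MvPolynomial.aeval_X]
    rfl
  · intro n
    rw [tauA, Dmap, liftA_mk, MvPolynomial.aeval_X]
    rfl

noncomputable def emap : MotDualSt →ₐ[ZMod 2] ZMod 2 :=
  liftA (fun _ => 0) (fun i => by simp [zero_pow])

lemma emap_counit : IsCounitA emap := by
  constructor
  · intro n
    rw [xiA_succ, emap, liftA_mk, MvPolynomial.aeval_X]
  · intro n
    rw [tauA, emap, liftA_mk, MvPolynomial.aeval_X]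

/-! ### Consequences of the comultiplication/counit formulas -/

lemma comul_xi_all {D : MotDualSt →ₐ[ZMod 2] MotDualSt ⊗[ZMod 2] MotDualSt}
    (hD : IsComulA D) (m : ℕ) :
    D (xiA m) = ∑ i ∈ Finset.range (m + 1), ((xiA (m - i)) ^ (2 ^ i)) ⊗ₜ[ZMod 2] (xiA i) := by
  cases m with
  | zero => rw [show xiA 0 = 1 from rfl, (show D 1 = 1 from D.map_one)]; simp [xiA, Algebra.TensorProduct.one_def]
  | succ n => exact hD.1 n

/-! ### The convolution monoid of sequences -/

noncomputable def seqComp (a b : ℕ → MotDualSt) : ℕ → MotDualSt :=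
  fun n => ∑ i ∈ Finset.range (n + 1), a (n - i) ^ 2 ^ i * b i

noncomputable def seqDelta : ℕ → MotDualSt := fun n => if n = 0 then 1 else 0

lemma seqComp_delta_left (a : ℕ → MotDualSt) : seqComp seqDelta a = a := by
  funext n
  unfold seqComp
  rw [Finset.sum_eq_single n]
  · simp [seqDelta]
  · intro i hi hne
    have : n - i ≠ 0 := by simp only [Finset.mem_range] at hi; omega
    simp [seqDelta, this, zero_pow (Nat.two_pow_pos i).ne']
  · intro h
    simp at h

lemma seqComp_delta_right (a : ℕ → MotDualSt) : seqComp a seqDelta = a := by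
  funext n
  unfold seqComp
  rw [Finset.sum_eq_single 0]
  · simp [seqDelta]
  · intro i hi hne
    simp [seqDelta, hne]
  · intro h
    simp at h

lemma seqComp_assoc (a b c : ℕ → MotDualSt) :
    seqComp (seqComp a b) c = seqComp a (seqComp b c) := by
  funext n
  unfold seqComp
  have lhs_eq : ∑ i ∈ Finset.range (n + 1),
        (∑ j ∈ Finset.range (n - i + 1), a (n - i - j) ^ 2 ^ j * b j) ^ 2 ^ i * c i
      = ∑ i ∈ Finset.range (n + 1), ∑ j ∈ Finset.range (n + 1 - i),
          a (n - i - j) ^ 2 ^ (j + i) * b j ^ 2 ^ i * c i := by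
    refine Finset.sum_congr rfl ?_
    intro i hi
    simp only [Finset.mem_range] at hi
    rw [c2_sum_pow (R := MotDualSt), Finset.sum_mul]
    have hr : n - i + 1 = n + 1 - i := by omega
    rw [hr]
    refine Finset.sum_congr rfl ?_
    intro j hj
    rw [mul_pow, ← pow_mul, ← pow_add]
  rw [lhs_eq, triangle n (fun i j => a (n - i - j) ^ 2 ^ (j + i) * b j ^ 2 ^ i * c i)]
  refine Finset.sum_congr rfl ?_
  intro k hk
  simp only [Finset.mem_range] at hk
  rw [Finset.mul_sum]
  refine Finset.sum_congr rfl ?_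
  intro i hi
  simp only [Finset.mem_range] at hi
  rw [show k - i + i = k by omega, show n - i - (k - i) = n - k by omega, mul_assoc]

/-! ### The antipode sequences -/

noncomputable def cA : ℕ → MotDualSt
  | 0 => 1
  | n + 1 => ∑ i ∈ Finset.range (n + 1), cA (n - i) ^ 2 ^ (i + 1) * xiA (i + 1)
  decreasing_by exact Nat.lt_succ_of_le (Nat.sub_le n i)

noncomputable def c'A : ℕ → MotDualSt
  | 0 => 1
  | n + 1 => ∑ i ∈ (Finset.range (n + 1)).attach,
      xiA (n + 1 - i.1) ^ 2 ^ i.1 * c'A i.1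
  decreasing_by
    have := i.2
    simp only [Finset.mem_range] at this
    omega

lemma c'A_succ (n : ℕ) :
    c'A (n + 1) = ∑ i ∈ Finset.range (n + 1), xiA (n + 1 - i) ^ 2 ^ i * c'A i := by
  rw [c'A]
  exact Finset.sum_attach (Finset.range (n + 1))
    (fun i => xiA (n + 1 - i) ^ 2 ^ i * c'A i)

lemma seqComp_c_xi : seqComp cA xiA = seqDelta := by
  funext n
  cases n with
  | zero => simp [seqComp, cA, xiA, seqDelta]
  | succ n =>
      unfold seqComp
      rw [Finset.sum_range_succ']
      have h1 : ∑ i ∈ Finset.range (n + 1), cA (n + 1 - (i + 1)) ^ 2 ^ (i + 1) * xiA (i + 1)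
          = cA (n + 1) := by
        rw [cA]
        refine Finset.sum_congr rfl ?_
        intro i hi
        have h : n + 1 - (i + 1) = n - i := by omega
        rw [h]
      rw [h1]
      simp only [Nat.sub_zero, pow_zero, pow_one]
      rw [show xiA 0 = 1 from rfl, mul_one]
      rw [c2_add_self (R := MotDualSt)]
      simp [seqDelta]

lemma seqComp_xi_c' : seqComp xiA c'A = seqDelta := by
  funext n
  cases n with
  | zero => simp [seqComp, c'A, xiA, seqDelta]
  | succ n =>
      unfold seqComp
      rw [Finset.sum_range_succ]
      rw [show (n + 1 - (n + 1)) = 0 from by omega, show xiA 0 = 1 from rfl, one_pow, one_mul]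
      rw [← c'A_succ n]
      rw [c2_add_self (R := MotDualSt)]
      simp [seqDelta]

lemma cA_eq_c'A : cA = c'A := by
  calc cA = seqComp cA seqDelta := (seqComp_delta_right cA).symm
    _ = seqComp cA (seqComp xiA c'A) := by rw [seqComp_xi_c']
    _ = seqComp (seqComp cA xiA) c'A := (seqComp_assoc _ _ _).symm
    _ = seqComp seqDelta c'A := by rw [seqComp_c_xi]
    _ = c'A := seqComp_delta_left c'A

lemma seqComp_xi_c : seqComp xiA cA = seqDelta := by
  rw [cA_eq_c'A]; exact seqComp_xi_c'

noncomputable def tA : ℕ → MotDualSt := seqComp cA tauA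

lemma seqComp_xi_t : seqComp xiA tA = tauA := by
  show seqComp xiA (seqComp cA tauA) = tauA
  rw [← seqComp_assoc, seqComp_xi_c, seqComp_delta_left]

lemma tA_sq (n : ℕ) : tA n ^ 2 = 0 := by
  show (∑ i ∈ Finset.range (n + 1), cA (n - i) ^ 2 ^ i * tauA i) ^ 2 = 0
  rw [c2_sum_sq (R := MotDualSt)]
  refine Finset.sum_eq_zero ?_
  intro i _
  rw [mul_pow, tauA_sq, mul_zero]

noncomputable def gS : ℕ ⊕ ℕ → MotDualSt
  | Sum.inl n => cA (n + 1)
  | Sum.inr n => tA n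

noncomputable def Smap : MotDualSt →ₐ[ZMod 2] MotDualSt :=
  liftA gS (fun i => tA_sq i)

lemma Smap_xi (m : ℕ) : Smap (xiA m) = cA m := by
  cases m with
  | zero =>
      rw [show xiA 0 = 1 from rfl, map_one, show cA 0 = 1 from by rw [cA]]
  | succ n =>
      rw [xiA_succ, Smap]
      exact (liftA_mk gS _ _).trans (MvPolynomial.aeval_X _ _)

lemma Smap_tau (n : ℕ) : Smap (tauA n) = tA n := by
  rw [tauA, Smap]
  exact (liftA_mk gS _ _).trans (MvPolynomial.aeval_X _ _)

/-! ### Coassociativity -/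

lemma D_xi_pow_expand {D : MotDualSt →ₐ[ZMod 2] MotDualSt ⊗[ZMod 2] MotDualSt}
    (hD : IsComulA D) (m i : ℕ) :
    D (xiA m) ^ 2 ^ i
      = ∑ j ∈ Finset.range (m + 1),
          (xiA (m - j) ^ 2 ^ (j + i)) ⊗ₜ[ZMod 2] (xiA j ^ 2 ^ i) := by
  rw [comul_xi_all hD, c2_sum_pow (R := MotDualSt ⊗[ZMod 2] MotDualSt)]
  refine Finset.sum_congr rfl fun j hj => ?_
  rw [Algebra.TensorProduct.tmul_pow, ← pow_mul, ← pow_add]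

lemma coassoc_of {D : MotDualSt →ₐ[ZMod 2] MotDualSt ⊗[ZMod 2] MotDualSt}
    (hD : IsComulA D) :
    ((Algebra.TensorProduct.assoc (ZMod 2) (ZMod 2) (ZMod 2) MotDualSt MotDualSt MotDualSt).toAlgHom.comp
        ((Algebra.TensorProduct.map D (AlgHom.id (ZMod 2) MotDualSt)).comp D) =
      (Algebra.TensorProduct.map (AlgHom.id (ZMod 2) MotDualSt) D).comp D) := by
  apply algHomA_ext
  rintro (n | n)
  · simp only [AlgHom.comp_apply, AlgEquiv.toAlgHom_eq_coe, AlgHom.coe_coe, AlgEquiv.coe_toAlgHom]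
    rw [show (Ideal.Quotient.mk _ (MvPolynomial.X (Sum.inl n)) : MotDualSt)
        = xiA (n + 1) from rfl]
    rw [hD.1 n, map_sum, map_sum, map_sum]
    have L : ∀ i ∈ Finset.range (n + 2),
        (Algebra.TensorProduct.assoc (ZMod 2) (ZMod 2) (ZMod 2) MotDualSt MotDualSt MotDualSt)
          ((Algebra.TensorProduct.map D (AlgHom.id (ZMod 2) MotDualSt))
            ((xiA (n + 1 - i) ^ 2 ^ i) ⊗ₜ[ZMod 2] xiA i))
        = ∑ j ∈ Finset.range (n + 2 - i),
            (xiA (n + 1 - i - j) ^ 2 ^ (j + i)) ⊗ₜ[ZMod 2] ((xiA j ^ 2 ^ i) ⊗ₜ[ZMod 2] xiA i) := by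
      intro i hi
      simp only [Finset.mem_range] at hi
      rw [Algebra.TensorProduct.map_tmul, (show ∀ (a : MotDualSt) (k : ℕ), D (a ^ k) = D a ^ k from fun a k => D.map_pow a k), AlgHom.id_apply,
        D_xi_pow_expand hD (n + 1 - i) i, TensorProduct.sum_tmul, map_sum,
        show n + 1 - i + 1 = n + 2 - i from by omega]
      refine Finset.sum_congr rfl fun j hj => ?_
      rw [Algebra.TensorProduct.assoc_tmul]
    have R : ∀ k ∈ Finset.range (n + 2),
        (Algebra.TensorProduct.map (AlgHom.id (ZMod 2) MotDualSt) D)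
          ((xiA (n + 1 - k) ^ 2 ^ k) ⊗ₜ[ZMod 2] xiA k)
        = ∑ i ∈ Finset.range (k + 1),
            (xiA (n + 1 - k) ^ 2 ^ k) ⊗ₜ[ZMod 2] ((xiA (k - i) ^ 2 ^ i) ⊗ₜ[ZMod 2] xiA i) := by
      intro k hk
      rw [Algebra.TensorProduct.map_tmul, AlgHom.id_apply, comul_xi_all hD k,
        TensorProduct.tmul_sum]
    rw [Finset.sum_congr rfl L, Finset.sum_congr rfl R,
      triangle (n + 1) (fun i j =>
        (xiA (n + 1 - i - j) ^ 2 ^ (j + i)) ⊗ₜ[ZMod 2] ((xiA j ^ 2 ^ i) ⊗ₜ[ZMod 2] xiA i))]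
    refine Finset.sum_congr rfl fun k hk => Finset.sum_congr rfl fun i hi => ?_
    simp only [Finset.mem_range] at hk hi
    rw [show k - i + i = k from by omega, show n + 1 - i - (k - i) = n + 1 - k from by omega]
  · simp only [AlgHom.comp_apply, AlgEquiv.toAlgHom_eq_coe, AlgHom.coe_coe, AlgEquiv.coe_toAlgHom]
    rw [show (Ideal.Quotient.mk _ (MvPolynomial.X (Sum.inr n)) : MotDualSt)
        = tauA n from rfl]
    rw [hD.2 n, map_add, map_add, map_add, map_sum, map_sum, map_sum]
    have L1 : (Algebra.TensorProduct.assoc (ZMod 2) (ZMod 2) (ZMod 2) MotDualSt MotDualSt MotDualSt)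
        ((Algebra.TensorProduct.map D (AlgHom.id (ZMod 2) MotDualSt))
          (tauA n ⊗ₜ[ZMod 2] (1 : MotDualSt)))
        = tauA n ⊗ₜ[ZMod 2] ((1 : MotDualSt) ⊗ₜ[ZMod 2] (1 : MotDualSt))
          + ∑ j ∈ Finset.range (n + 1),
              (xiA (n - j) ^ 2 ^ j) ⊗ₜ[ZMod 2] (tauA j ⊗ₜ[ZMod 2] (1 : MotDualSt)) := by
      rw [Algebra.TensorProduct.map_tmul, AlgHom.id_apply, hD.2 n,
        TensorProduct.add_tmul, TensorProduct.sum_tmul, map_add, map_sum,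
        Algebra.TensorProduct.assoc_tmul]
      congr 1
    have L2 : ∀ i ∈ Finset.range (n + 1),
        (Algebra.TensorProduct.assoc (ZMod 2) (ZMod 2) (ZMod 2) MotDualSt MotDualSt MotDualSt)
          ((Algebra.TensorProduct.map D (AlgHom.id (ZMod 2) MotDualSt))
            ((xiA (n - i) ^ 2 ^ i) ⊗ₜ[ZMod 2] tauA i))
        = ∑ j ∈ Finset.range (n + 1 - i),
            (xiA (n - i - j) ^ 2 ^ (j + i)) ⊗ₜ[ZMod 2]
              ((xiA j ^ 2 ^ i) ⊗ₜ[ZMod 2] tauA i) := by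
      intro i hi
      simp only [Finset.mem_range] at hi
      rw [Algebra.TensorProduct.map_tmul, (show ∀ (a : MotDualSt) (k : ℕ), D (a ^ k) = D a ^ k from fun a k => D.map_pow a k), AlgHom.id_apply,
        D_xi_pow_expand hD (n - i) i, TensorProduct.sum_tmul, map_sum,
        show n - i + 1 = n + 1 - i from by omega]
      refine Finset.sum_congr rfl fun j hj => ?_
      rw [Algebra.TensorProduct.assoc_tmul]
    have R1 : (Algebra.TensorProduct.map (AlgHom.id (ZMod 2) MotDualSt) D)
        (tauA n ⊗ₜ[ZMod 2] (1 : MotDualSt))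
        = tauA n ⊗ₜ[ZMod 2] ((1 : MotDualSt) ⊗ₜ[ZMod 2] (1 : MotDualSt)) := by
      rw [Algebra.TensorProduct.map_tmul, AlgHom.id_apply, (show D 1 = 1 from D.map_one),
        Algebra.TensorProduct.one_def]
    have R2 : ∀ k ∈ Finset.range (n + 1),
        (Algebra.TensorProduct.map (AlgHom.id (ZMod 2) MotDualSt) D)
          ((xiA (n - k) ^ 2 ^ k) ⊗ₜ[ZMod 2] tauA k)
        = (xiA (n - k) ^ 2 ^ k) ⊗ₜ[ZMod 2] (tauA k ⊗ₜ[ZMod 2] (1 : MotDualSt))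
          + ∑ i ∈ Finset.range (k + 1),
              (xiA (n - k) ^ 2 ^ k) ⊗ₜ[ZMod 2]
                ((xiA (k - i) ^ 2 ^ i) ⊗ₜ[ZMod 2] tauA i) := by
      intro k hk
      rw [Algebra.TensorProduct.map_tmul, AlgHom.id_apply, hD.2 k,
        TensorProduct.tmul_add, TensorProduct.tmul_sum]
    rw [L1, R1, Finset.sum_congr rfl L2, Finset.sum_congr rfl R2,
      Finset.sum_add_distrib]
    have hdd : ∑ i ∈ Finset.range (n + 1), ∑ j ∈ Finset.range (n + 1 - i),
          (xiA (n - i - j) ^ 2 ^ (j + i)) ⊗ₜ[ZMod 2]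
            ((xiA j ^ 2 ^ i) ⊗ₜ[ZMod 2] tauA i)
        = ∑ k ∈ Finset.range (n + 1), ∑ i ∈ Finset.range (k + 1),
            (xiA (n - k) ^ 2 ^ k) ⊗ₜ[ZMod 2]
              ((xiA (k - i) ^ 2 ^ i) ⊗ₜ[ZMod 2] tauA i) := by
      rw [triangle n (fun i j => (xiA (n - i - j) ^ 2 ^ (j + i)) ⊗ₜ[ZMod 2]
        ((xiA j ^ 2 ^ i) ⊗ₜ[ZMod 2] tauA i))]
      refine Finset.sum_congr rfl fun k hk => Finset.sum_congr rfl fun i hi => ?_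
      simp only [Finset.mem_range] at hk hi
      rw [show k - i + i = k from by omega, show n - i - (k - i) = n - k from by omega]
    rw [hdd]
    abel

/-! ### Counit laws -/

lemma counit_left_of {D : MotDualSt →ₐ[ZMod 2] MotDualSt ⊗[ZMod 2] MotDualSt}
    {e : MotDualSt →ₐ[ZMod 2] ZMod 2} (hD : IsComulA D) (he : IsCounitA e) :
    (Algebra.TensorProduct.lid (ZMod 2) MotDualSt).toAlgHom.comp
        ((Algebra.TensorProduct.map e (AlgHom.id (ZMod 2) MotDualSt)).comp D) =
      AlgHom.id (ZMod 2) MotDualSt := by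
  apply algHomA_ext
  rintro (n | n) <;>
    simp only [AlgHom.comp_apply, AlgEquiv.toAlgHom_eq_coe, AlgHom.coe_coe, AlgHom.id_apply, AlgEquiv.coe_toAlgHom]
  · rw [show (Ideal.Quotient.mk _ (MvPolynomial.X (Sum.inl n)) : MotDualSt)
        = xiA (n + 1) from rfl, hD.1 n, map_sum, map_sum]
    have Lt : ∀ i ∈ Finset.range (n + 2),
        (Algebra.TensorProduct.lid (ZMod 2) MotDualSt)
          ((Algebra.TensorProduct.map e (AlgHom.id (ZMod 2) MotDualSt))
            ((xiA (n + 1 - i) ^ 2 ^ i) ⊗ₜ[ZMod 2] xiA i))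
        = (e (xiA (n + 1 - i))) ^ 2 ^ i • xiA i := by
      intro i hi
      rw [Algebra.TensorProduct.map_tmul, map_pow, AlgHom.id_apply,
        Algebra.TensorProduct.lid_tmul]
    rw [Finset.sum_congr rfl Lt, Finset.sum_eq_single (n + 1)]
    · rw [show n + 1 - (n + 1) = 0 from by omega, show xiA 0 = 1 from rfl,
        map_one, one_pow, one_smul]
    · intro i hi hne
      simp only [Finset.mem_range] at hi
      rw [show n + 1 - i = (n - i) + 1 from by omega, he.1 (n - i),
        zero_pow (Nat.two_pow_pos i).ne', zero_smul]
    · intro h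
      simp at h
  · rw [show (Ideal.Quotient.mk _ (MvPolynomial.X (Sum.inr n)) : MotDualSt)
        = tauA n from rfl, hD.2 n, map_add, map_add, map_sum, map_sum]
    have Lt : ∀ i ∈ Finset.range (n + 1),
        (Algebra.TensorProduct.lid (ZMod 2) MotDualSt)
          ((Algebra.TensorProduct.map e (AlgHom.id (ZMod 2) MotDualSt))
            ((xiA (n - i) ^ 2 ^ i) ⊗ₜ[ZMod 2] tauA i))
        = (e (xiA (n - i))) ^ 2 ^ i • tauA i := by
      intro i hi
      rw [Algebra.TensorProduct.map_tmul, map_pow, AlgHom.id_apply,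
        Algebra.TensorProduct.lid_tmul]
    rw [Finset.sum_congr rfl Lt, Finset.sum_eq_single n]
    · rw [show n - n = 0 from by omega, show xiA 0 = 1 from rfl, map_one, one_pow, one_smul,
        Algebra.TensorProduct.map_tmul, AlgHom.id_apply, Algebra.TensorProduct.lid_tmul,
        he.2 n, zero_smul, zero_add]
    · intro i hi hne
      simp only [Finset.mem_range] at hi
      rw [show n - i = (n - i - 1) + 1 from by omega, he.1 (n - i - 1),
        zero_pow (Nat.two_pow_pos i).ne', zero_smul]
    · intro h
      simp at h

lemma counit_right_of {D : MotDualSt →ₐ[ZMod 2] MotDualSt ⊗[ZMod 2] MotDualSt}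
    {e : MotDualSt →ₐ[ZMod 2] ZMod 2} (hD : IsComulA D) (he : IsCounitA e) :
    (Algebra.TensorProduct.rid (ZMod 2) (ZMod 2) MotDualSt).toAlgHom.comp
        ((Algebra.TensorProduct.map (AlgHom.id (ZMod 2) MotDualSt) e).comp D) =
      AlgHom.id (ZMod 2) MotDualSt := by
  apply algHomA_ext
  rintro (n | n) <;>
    simp only [AlgHom.comp_apply, AlgEquiv.toAlgHom_eq_coe, AlgHom.coe_coe, AlgHom.id_apply, AlgEquiv.coe_toAlgHom]
  · rw [show (Ideal.Quotient.mk _ (MvPolynomial.X (Sum.inl n)) : MotDualSt)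
        = xiA (n + 1) from rfl, hD.1 n, map_sum, map_sum]
    have Rt : ∀ i ∈ Finset.range (n + 2),
        (Algebra.TensorProduct.rid (ZMod 2) (ZMod 2) MotDualSt)
          ((Algebra.TensorProduct.map (AlgHom.id (ZMod 2) MotDualSt) e)
            ((xiA (n + 1 - i) ^ 2 ^ i) ⊗ₜ[ZMod 2] xiA i))
        = e (xiA i) • (xiA (n + 1 - i) ^ 2 ^ i) := by
      intro i hi
      rw [Algebra.TensorProduct.map_tmul, AlgHom.id_apply,
        Algebra.TensorProduct.rid_tmul]
    rw [Finset.sum_congr rfl Rt, Finset.sum_eq_single 0]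
    · rw [show xiA 0 = 1 from rfl, map_one, one_smul, Nat.sub_zero, pow_zero, pow_one]
    · intro i hi hne
      obtain ⟨m, rfl⟩ := Nat.exists_eq_succ_of_ne_zero hne
      rw [he.1 m, zero_smul]
    · intro h
      simp at h
  · rw [show (Ideal.Quotient.mk _ (MvPolynomial.X (Sum.inr n)) : MotDualSt)
        = tauA n from rfl, hD.2 n, map_add, map_add, map_sum, map_sum]
    have Rt : ∀ i ∈ Finset.range (n + 1),
        (Algebra.TensorProduct.rid (ZMod 2) (ZMod 2) MotDualSt)
          ((Algebra.TensorProduct.map (AlgHom.id (ZMod 2) MotDualSt) e)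
            ((xiA (n - i) ^ 2 ^ i) ⊗ₜ[ZMod 2] tauA i))
        = e (tauA i) • (xiA (n - i) ^ 2 ^ i) := by
      intro i hi
      rw [Algebra.TensorProduct.map_tmul, AlgHom.id_apply,
        Algebra.TensorProduct.rid_tmul]
    rw [Finset.sum_congr rfl Rt, Finset.sum_eq_zero
      (fun i hi => by rw [he.2 i, zero_smul]),
      Algebra.TensorProduct.map_tmul, AlgHom.id_apply, map_one,
      Algebra.TensorProduct.rid_tmul, one_smul, add_zero]

/-! ### Antipode -/

lemma antipode_left_alg {D : MotDualSt →ₐ[ZMod 2] MotDualSt ⊗[ZMod 2] MotDualSt}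
    {e : MotDualSt →ₐ[ZMod 2] ZMod 2} (hD : IsComulA D) (he : IsCounitA e) :
    (Algebra.TensorProduct.lmul' (ZMod 2)).comp
        ((Algebra.TensorProduct.map Smap (AlgHom.id (ZMod 2) MotDualSt)).comp D) =
      (Algebra.ofId (ZMod 2) MotDualSt).comp e := by
  apply algHomA_ext
  rintro (n | n) <;> simp only [AlgHom.comp_apply]
  · rw [show (Ideal.Quotient.mk _ (MvPolynomial.X (Sum.inl n)) : MotDualSt)
        = xiA (n + 1) from rfl, hD.1 n, map_sum, map_sum, he.1 n, map_zero]
    have Lt : ∀ i ∈ Finset.range (n + 2),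
        (Algebra.TensorProduct.lmul' (ZMod 2) (S := MotDualSt))
          ((Algebra.TensorProduct.map Smap (AlgHom.id (ZMod 2) MotDualSt))
            ((xiA (n + 1 - i) ^ 2 ^ i) ⊗ₜ[ZMod 2] xiA i))
        = cA (n + 1 - i) ^ 2 ^ i * xiA i := by
      intro i hi
      rw [Algebra.TensorProduct.map_tmul, map_pow, AlgHom.id_apply,
        Algebra.TensorProduct.lmul'_apply_tmul, Smap_xi]
    rw [Finset.sum_congr rfl Lt,
      show ∑ i ∈ Finset.range (n + 2), cA (n + 1 - i) ^ 2 ^ i * xiA i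
        = seqComp cA xiA (n + 1) from rfl,
      seqComp_c_xi]
    simp [seqDelta]
  · rw [show (Ideal.Quotient.mk _ (MvPolynomial.X (Sum.inr n)) : MotDualSt)
        = tauA n from rfl, hD.2 n, map_add, map_add, map_sum, map_sum, he.2 n, map_zero]
    have Lt : ∀ i ∈ Finset.range (n + 1),
        (Algebra.TensorProduct.lmul' (ZMod 2) (S := MotDualSt))
          ((Algebra.TensorProduct.map Smap (AlgHom.id (ZMod 2) MotDualSt))
            ((xiA (n - i) ^ 2 ^ i) ⊗ₜ[ZMod 2] tauA i))
        = cA (n - i) ^ 2 ^ i * tauA i := by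
      intro i hi
      rw [Algebra.TensorProduct.map_tmul, map_pow, AlgHom.id_apply,
        Algebra.TensorProduct.lmul'_apply_tmul, Smap_xi]
    rw [Finset.sum_congr rfl Lt,
      show ∑ i ∈ Finset.range (n + 1), cA (n - i) ^ 2 ^ i * tauA i = tA n from rfl,
      Algebra.TensorProduct.map_tmul, AlgHom.id_apply,
      Algebra.TensorProduct.lmul'_apply_tmul, Smap_tau, mul_one]
    exact c2_add_self (R := MotDualSt) (tA n)

lemma antipode_right_alg {D : MotDualSt →ₐ[ZMod 2] MotDualSt ⊗[ZMod 2] MotDualSt}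
    {e : MotDualSt →ₐ[ZMod 2] ZMod 2} (hD : IsComulA D) (he : IsCounitA e) :
    (Algebra.TensorProduct.lmul' (ZMod 2)).comp
        ((Algebra.TensorProduct.map (AlgHom.id (ZMod 2) MotDualSt) Smap).comp D) =
      (Algebra.ofId (ZMod 2) MotDualSt).comp e := by
  apply algHomA_ext
  rintro (n | n) <;> simp only [AlgHom.comp_apply]
  · rw [show (Ideal.Quotient.mk _ (MvPolynomial.X (Sum.inl n)) : MotDualSt)
        = xiA (n + 1) from rfl, hD.1 n, map_sum, map_sum, he.1 n, map_zero]
    have Lt : ∀ i ∈ Finset.range (n + 2),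
        (Algebra.TensorProduct.lmul' (ZMod 2) (S := MotDualSt))
          ((Algebra.TensorProduct.map (AlgHom.id (ZMod 2) MotDualSt) Smap)
            ((xiA (n + 1 - i) ^ 2 ^ i) ⊗ₜ[ZMod 2] xiA i))
        = xiA (n + 1 - i) ^ 2 ^ i * cA i := by
      intro i hi
      rw [Algebra.TensorProduct.map_tmul, AlgHom.id_apply,
        Algebra.TensorProduct.lmul'_apply_tmul, Smap_xi]
    rw [Finset.sum_congr rfl Lt,
      show ∑ i ∈ Finset.range (n + 2), xiA (n + 1 - i) ^ 2 ^ i * cA i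
        = seqComp xiA cA (n + 1) from rfl,
      seqComp_xi_c]
    simp [seqDelta]
  · rw [show (Ideal.Quotient.mk _ (MvPolynomial.X (Sum.inr n)) : MotDualSt)
        = tauA n from rfl, hD.2 n, map_add, map_add, map_sum, map_sum, he.2 n, map_zero]
    have Lt : ∀ i ∈ Finset.range (n + 1),
        (Algebra.TensorProduct.lmul' (ZMod 2) (S := MotDualSt))
          ((Algebra.TensorProduct.map (AlgHom.id (ZMod 2) MotDualSt) Smap)
            ((xiA (n - i) ^ 2 ^ i) ⊗ₜ[ZMod 2] tauA i))
        = xiA (n - i) ^ 2 ^ i * tA i := by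
      intro i hi
      rw [Algebra.TensorProduct.map_tmul, AlgHom.id_apply,
        Algebra.TensorProduct.lmul'_apply_tmul, Smap_tau]
    rw [Finset.sum_congr rfl Lt,
      show ∑ i ∈ Finset.range (n + 1), xiA (n - i) ^ 2 ^ i * tA i
        = seqComp xiA tA n from rfl,
      seqComp_xi_t,
      Algebra.TensorProduct.map_tmul, AlgHom.id_apply, map_one,
      Algebra.TensorProduct.lmul'_apply_tmul, mul_one]
    exact c2_add_self (R := MotDualSt) (tauA n)

lemma bridge_left (S : MotDualSt →ₐ[ZMod 2] MotDualSt)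
    (z : MotDualSt ⊗[ZMod 2] MotDualSt) :
    LinearMap.mul' (ZMod 2) MotDualSt
        ((TensorProduct.map S.toLinearMap LinearMap.id) z)
      = (Algebra.TensorProduct.lmul' (ZMod 2) (S := MotDualSt))
          ((Algebra.TensorProduct.map S (AlgHom.id (ZMod 2) MotDualSt)) z) := by
  induction z using TensorProduct.induction_on with
  | zero => simp
  | tmul a b =>
      simp [LinearMap.mul'_apply, Algebra.TensorProduct.lmul'_apply_tmul]
  | add x y hx hy => simp only [map_add, hx, hy]

lemma bridge_right (S : MotDualSt →ₐ[ZMod 2] MotDualSt)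
    (z : MotDualSt ⊗[ZMod 2] MotDualSt) :
    LinearMap.mul' (ZMod 2) MotDualSt
        ((TensorProduct.map LinearMap.id S.toLinearMap) z)
      = (Algebra.TensorProduct.lmul' (ZMod 2) (S := MotDualSt))
          ((Algebra.TensorProduct.map (AlgHom.id (ZMod 2) MotDualSt) S) z) := by
  induction z using TensorProduct.induction_on with
  | zero => simp
  | tmul a b =>
      simp [LinearMap.mul'_apply, Algebra.TensorProduct.lmul'_apply_tmul]
  | add x y hx hy => simp only [map_add, hx, hy]


/-- The Cτ-linear dual Steenrod algebra `A = F2[ξ,τ]/(τ²)` is a Hopf algebra: the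
comultiplication `Δ` and counit `ε` exist uniquely as algebra maps with the stated
values on the generators, `Δ` is coassociative with counit `ε` (so `(A, Δ, ε)` is a
commutative bialgebra), and there is an antipode. -/
theorem motivic_dualSteenrod_hopf :
    (∃! D : MotDualSt →ₐ[ZMod 2] MotDualSt ⊗[ZMod 2] MotDualSt, IsComulA D) ∧
    (∃! e : MotDualSt →ₐ[ZMod 2] ZMod 2, IsCounitA e) ∧
    (∀ (D : MotDualSt →ₐ[ZMod 2] MotDualSt ⊗[ZMod 2] MotDualSt)
        (e : MotDualSt →ₐ[ZMod 2] ZMod 2),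
      IsComulA D → IsCounitA e →
      -- coassociativity
      ((Algebra.TensorProduct.assoc (ZMod 2) (ZMod 2) (ZMod 2) MotDualSt MotDualSt MotDualSt).toAlgHom.comp
          ((Algebra.TensorProduct.map D (AlgHom.id (ZMod 2) MotDualSt)).comp D) =
        (Algebra.TensorProduct.map (AlgHom.id (ZMod 2) MotDualSt) D).comp D) ∧
      -- left and right counit laws
      ((Algebra.TensorProduct.lid (ZMod 2) MotDualSt).toAlgHom.comp
          ((Algebra.TensorProduct.map e (AlgHom.id (ZMod 2) MotDualSt)).comp D) =
        AlgHom.id (ZMod 2) MotDualSt) ∧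
      ((Algebra.TensorProduct.rid (ZMod 2) (ZMod 2) MotDualSt).toAlgHom.comp
          ((Algebra.TensorProduct.map (AlgHom.id (ZMod 2) MotDualSt) e).comp D) =
        AlgHom.id (ZMod 2) MotDualSt) ∧
      -- existence of an antipode
      (∃ S : MotDualSt →ₗ[ZMod 2] MotDualSt,
        (LinearMap.mul' (ZMod 2) MotDualSt).comp
            ((TensorProduct.map S LinearMap.id).comp D.toLinearMap) =
          (Algebra.linearMap (ZMod 2) MotDualSt).comp e.toLinearMap ∧
        (LinearMap.mul' (ZMod 2) MotDualSt).comp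
            ((TensorProduct.map LinearMap.id S).comp D.toLinearMap) =
          (Algebra.linearMap (ZMod 2) MotDualSt).comp e.toLinearMap)) := by
  refine ⟨⟨Dmap, Dmap_comul, ?_⟩, ⟨emap, emap_counit, ?_⟩, ?_⟩
  · intro D' hD'
    apply algHomA_ext
    rintro (n | n)
    · rw [show (Ideal.Quotient.mk _ (MvPolynomial.X (Sum.inl n)) : MotDualSt)
          = xiA (n + 1) from rfl, hD'.1 n, Dmap_comul.1 n]
    · rw [show (Ideal.Quotient.mk _ (MvPolynomial.X (Sum.inr n)) : MotDualSt)
          = tauA n from rfl, hD'.2 n, Dmap_comul.2 n]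
  · intro e' he'
    apply algHomA_ext
    rintro (n | n)
    · rw [show (Ideal.Quotient.mk _ (MvPolynomial.X (Sum.inl n)) : MotDualSt)
          = xiA (n + 1) from rfl, he'.1 n, emap_counit.1 n]
    · rw [show (Ideal.Quotient.mk _ (MvPolynomial.X (Sum.inr n)) : MotDualSt)
          = tauA n from rfl, he'.2 n, emap_counit.2 n]
  · intro D e hD he
    refine ⟨coassoc_of hD, counit_left_of hD he, counit_right_of hD he,
      Smap.toLinearMap, ?_, ?_⟩
    · apply LinearMap.ext
      intro x
      simp only [LinearMap.comp_apply, AlgHom.toLinearMap_apply, Algebra.linearMap_apply]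
      rw [bridge_left Smap (D x)]
      have h := AlgHom.congr_fun (antipode_left_alg hD he) x
      simp only [AlgHom.comp_apply] at h
      rw [h]
      rfl
    · apply LinearMap.ext
      intro x
      simp only [LinearMap.comp_apply, AlgHom.toLinearMap_apply, Algebra.linearMap_apply]
      rw [bridge_right Smap (D x)]
      have h := AlgHom.congr_fun (antipode_right_alg hD he) x
      simp only [AlgHom.comp_apply] at h
      rw [h]
      rfl
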